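/- Let I be a finite nonempty index set, and for each i ∈ I let G_i be a simple d-regular graph on a vertex set V_i with |V_i| = n. Let G be the disjoint union of the G_i, let 1 ≤ k ≤ n and η ∈ [0,1]. Suppose that for every i ∈ I and every nonempty S ⊆ V_i with |S| ≤ k, one has ∂_{G_i}(S) > (1 − η) · d · |S|. Then for every S ⊆ V = ⨆_{i ∈ I} V_i with |S| = k, cov_G(S) > d·k·(2 − η)/2. -/

import Mathlib

open Finset

/-- `cov_G(S)`: the number of edges of `G` with at least one endpoint in `S`. -/
noncomputable def covG {α : Type*} (G : SimpleGraph α) (S : Finset α) : ℕ :=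
  {e ∈ G.edgeSet | ∃ v ∈ S, v ∈ e}.ncard

/-- `∂_G(S)`: the number of edges of `G` with exactly one endpoint in `S`. -/
noncomputable def bdryG {α : Type*} (G : SimpleGraph α) (S : Finset α) : ℕ :=
  {e ∈ G.edgeSet | ∃ u v, e = s(u, v) ∧ u ∈ S ∧ v ∉ S}.ncard

section perGraph
variable {α : Type*} [Fintype α] (G : SimpleGraph α)

noncomputable def covF (S : Finset α) : Finset (Sym2 α) :=
  (Set.toFinite {e ∈ G.edgeSet | ∃ v ∈ S, v ∈ e}).toFinset

noncomputable def bdryF (S : Finset α) : Finset (Sym2 α) :=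
  (Set.toFinite {e ∈ G.edgeSet | ∃ u v, e = s(u, v) ∧ u ∈ S ∧ v ∉ S}).toFinset

lemma covG_eq (S : Finset α) : covG G S = (covF G S).card :=
  Set.ncard_eq_toFinset_card _ _

lemma bdryG_eq (S : Finset α) : bdryG G S = (bdryF G S).card :=
  Set.ncard_eq_toFinset_card _ _

lemma mem_covF {S : Finset α} {e : Sym2 α} :
    e ∈ covF G S ↔ e ∈ G.edgeSet ∧ ∃ v ∈ S, v ∈ e := by
  simp [covF, Set.Finite.mem_toFinset, Set.mem_setOf_eq]

lemma mem_bdryF {S : Finset α} {e : Sym2 α} :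
    e ∈ bdryF G S ↔ e ∈ G.edgeSet ∧ ∃ u v, e = s(u, v) ∧ u ∈ S ∧ v ∉ S := by
  simp [bdryF, Set.Finite.mem_toFinset, Set.mem_setOf_eq]

lemma card_filter_mem_sym2 [DecidableEq α] (S : Finset α) {u v : α} (huv : u ≠ v) :
    (S.filter (· ∈ s(u, v))).card
      = (if u ∈ S then 1 else 0) + (if v ∈ S then 1 else 0) := by
  have h : S.filter (· ∈ s(u, v)) = S.filter (· = u) ∪ S.filter (· = v) := by
    rw [← Finset.filter_or]
    apply Finset.filter_congr
    intro x _
    simp [Sym2.mem_iff]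
  rw [h, Finset.card_union_of_disjoint, Finset.filter_eq', Finset.filter_eq']
  · split_ifs <;> simp
  · rw [Finset.filter_eq', Finset.filter_eq']
    split_ifs <;> simp [huv, huv.symm]

lemma two_mul_covG [DecidableEq α] [DecidableRel G.Adj] {d : ℕ}
    (hreg : G.IsRegularOfDegree d) (S : Finset α) :
    2 * covG G S = d * S.card + bdryG G S := by
  classical
  rw [covG_eq, bdryG_eq]
  set A := covF G S with hA
  set B := bdryF G S with hB
  have hBA : B ⊆ A := by
    intro e he
    rw [mem_bdryF] at he
    obtain ⟨he1, u, v, rfl, hu, -⟩ := he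
    exact (mem_covF G).2 ⟨he1, u, hu, by simp⟩
  -- key double count
  have key : ∑ e ∈ A, (S.filter (· ∈ e)).card = d * S.card := by
    have : ∑ e ∈ A, (S.filter (· ∈ e)).card
        = ∑ e ∈ A, ∑ v ∈ S, (if v ∈ e then 1 else 0) := by
      refine Finset.sum_congr rfl fun e _ => ?_
      rw [Finset.card_filter]
    rw [this, Finset.sum_comm]
    have h2 : ∀ v ∈ S, (∑ e ∈ A, if v ∈ e then 1 else 0) = d := by
      intro v hv
      rw [← Finset.card_filter]
      have : A.filter (fun e => v ∈ e) = G.incidenceFinset v := by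
        rw [G.incidenceFinset_eq_filter]
        ext e
        simp only [Finset.mem_filter, hA, mem_covF, SimpleGraph.mem_edgeFinset]
        constructor
        · rintro ⟨⟨h1, -⟩, h2⟩; exact ⟨h1, h2⟩
        · rintro ⟨h1, h2⟩; exact ⟨⟨h1, v, hv, h2⟩, h2⟩
      rw [this, G.card_incidenceFinset_eq_degree, hreg v]
    rw [Finset.sum_congr rfl h2, Finset.sum_const, smul_eq_mul, mul_comm]
  have f1 : ∀ e ∈ B, (S.filter (· ∈ e)).card = 1 := by
    intro e he
    rw [mem_bdryF] at he
    obtain ⟨he1, u, v, rfl, hu, hv⟩ := he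
    have huv : u ≠ v := G.ne_of_adj (G.mem_edgeSet.mp he1)
    rw [card_filter_mem_sym2 S huv, if_pos hu, if_neg hv]
  have f2 : ∀ e ∈ A \ B, (S.filter (· ∈ e)).card = 2 := by
    intro e he
    rw [Finset.mem_sdiff] at he
    obtain ⟨heA, heB⟩ := he
    rw [mem_covF] at heA
    obtain ⟨he1, w, hw, hwe⟩ := heA
    rw [mem_bdryF] at heB
    push_neg at heB
    revert he1 hwe heB
    induction e using Sym2.ind with
    | _ u v =>
      intro he1 hwe heB
      have huv : u ≠ v := G.ne_of_adj (G.mem_edgeSet.mp he1)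
      have hu : u ∈ S := by
        by_contra hu
        have hv : v ∈ S := by
          rcases Sym2.mem_iff.mp hwe with h | h
          · exact absurd (h ▸ hw) hu
          · exact h ▸ hw
        exact hu (heB he1 v u Sym2.eq_swap hv)
      have hv : v ∈ S := by
        by_contra hv
        exact hv (heB he1 u v rfl hu)
      rw [card_filter_mem_sym2 S huv, if_pos hu, if_pos hv]
  have split : ∑ e ∈ A, (S.filter (· ∈ e)).card
      = ∑ e ∈ B, (S.filter (· ∈ e)).card + ∑ e ∈ A \ B, (S.filter (· ∈ e)).card := by
    rw [← Finset.sum_union (Finset.disjoint_sdiff), Finset.union_sdiff_of_subset hBA]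
  rw [Finset.sum_congr rfl f1, Finset.sum_congr rfl f2, Finset.sum_const, Finset.sum_const,
    smul_eq_mul, mul_one, smul_eq_mul] at split
  rw [key] at split
  have hcard : (A \ B).card + B.card = A.card := Finset.card_sdiff_add_card_eq_card hBA
  omega

end perGraph

/-- The disjoint union of the graphs `G i`: a graph on `Σ i, V i` whose edges are
exactly the edges within each `G i`. -/
def sigmaGraph {I : Type*} {V : I → Type*} (G : ∀ i, SimpleGraph (V i)) :
    SimpleGraph (Σ i, V i) where
  Adj x y := ∃ (i : I) (a b : V i), (G i).Adj a b ∧ x = ⟨i, a⟩ ∧ y = ⟨i, b⟩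
  symm := by
    constructor
    rintro x y ⟨i, a, b, hab, rfl, rfl⟩
    exact ⟨i, b, a, hab.symm, rfl, rfl⟩
  loopless := by
    constructor
    rintro x ⟨i, a, b, hab, rfl, h⟩
    have hab' : a = b := eq_of_heq (Sigma.mk.inj_iff.mp h).2
    exact (G i).loopless.irrefl a (hab' ▸ hab)

open scoped Classical

section sigma
variable {I : Type*} [Fintype I] {V : I → Type*} [∀ i, Fintype (V i)]
  (G : ∀ i, SimpleGraph (V i))

noncomputable def sliceF (S : Finset (Σ i, V i)) (i : I) : Finset (V i) :=
  (Set.toFinite {a : V i | (⟨i, a⟩ : Σ i, V i) ∈ S}).toFinset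

lemma mem_sliceF {S : Finset (Σ i, V i)} {i : I} {a : V i} :
    a ∈ sliceF S i ↔ (⟨i, a⟩ : Σ i, V i) ∈ S := Set.Finite.mem_toFinset _

lemma image_sliceF (S : Finset (Σ i, V i)) (i : I) :
    (sliceF S i).image (Sigma.mk i) = {x ∈ S | x.1 = i} := by
  classical
  ext ⟨j, b⟩
  simp only [Finset.mem_image, Finset.mem_filter, mem_sliceF]
  constructor
  · rintro ⟨a, ha, heq⟩
    obtain ⟨rfl, h2⟩ := Sigma.mk.inj_iff.mp heq
    exact ⟨(eq_of_heq h2) ▸ ha, rfl⟩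
  · rintro ⟨hb, rfl⟩
    exact ⟨b, hb, rfl⟩

lemma sum_card_sliceF (S : Finset (Σ i, V i)) :
    ∑ i, (sliceF S i).card = S.card := by
  classical
  rw [Finset.card_eq_sum_card_fiberwise (fun x _ => Finset.mem_univ x.1)]
  refine Finset.sum_congr rfl fun i _ => ?_
  rw [← image_sliceF, Finset.card_image_of_injective _ sigma_mk_injective]

lemma card_sliceF_le (S : Finset (Σ i, V i)) (i : I) : (sliceF S i).card ≤ S.card := by
  classical
  rw [← Finset.card_image_of_injective _ (sigma_mk_injective (i := i)), image_sliceF]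
  exact Finset.card_filter_le _ _

lemma covF_sigma (S : Finset (Σ i, V i)) :
    covF (sigmaGraph G) S
      = Finset.univ.biUnion
          (fun i => (covF (G i) (sliceF S i)).image (Sym2.map (Sigma.mk i))) := by
  classical
  apply Finset.Subset.antisymm
  · intro e he
    rw [mem_covF] at he
    obtain ⟨he1, v, hv, hve⟩ := he
    revert he1 hve
    induction e using Sym2.ind with
    | _ x y =>
      intro he1 hve
      obtain ⟨i, a, b, hab, rfl, rfl⟩ := (sigmaGraph G).mem_edgeSet.mp he1
      rw [Finset.mem_biUnion]
      refine ⟨i, Finset.mem_univ i, ?_⟩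
      rw [Finset.mem_image]
      refine ⟨s(a, b), ?_, by rw [Sym2.map_pair_eq]⟩
      rw [mem_covF]
      refine ⟨(G i).mem_edgeSet.mpr hab, ?_⟩
      rcases Sym2.mem_iff.mp hve with h | h
      · exact ⟨a, mem_sliceF.mpr (h ▸ hv), by simp⟩
      · exact ⟨b, mem_sliceF.mpr (h ▸ hv), by simp⟩
  · intro e he
    rw [Finset.mem_biUnion] at he
    obtain ⟨i, -, he⟩ := he
    rw [Finset.mem_image] at he
    obtain ⟨e', he', rfl⟩ := he
    revert he'
    induction e' using Sym2.ind with
    | _ a b =>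
      intro he'
      rw [mem_covF] at he'
      obtain ⟨h1, w, hw, hwe⟩ := he'
      rw [Sym2.map_pair_eq, mem_covF]
      constructor
      · exact (sigmaGraph G).mem_edgeSet.mpr ⟨i, a, b, (G i).mem_edgeSet.mp h1, rfl, rfl⟩
      · refine ⟨⟨i, w⟩, mem_sliceF.mp hw, ?_⟩
        rcases Sym2.mem_iff.mp hwe with h | h <;> subst h <;> simp

lemma covG_sigma (S : Finset (Σ i, V i)) :
    covG (sigmaGraph G) S = ∑ i, covG (G i) (sliceF S i) := by
  classical
  rw [covG_eq, covF_sigma]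
  rw [Finset.card_biUnion]
  · refine Finset.sum_congr rfl fun i _ => ?_
    rw [Finset.card_image_of_injective _ (Sym2.map.injective sigma_mk_injective),
      covG_eq]
  · intro i _ j _ hij
    rw [Function.onFun, Finset.disjoint_left]
    intro e h1 h2
    rw [Finset.mem_image] at h1 h2
    obtain ⟨e1, -, he1⟩ := h1
    obtain ⟨e2, -, he2⟩ := h2
    apply hij
    revert he1
    induction e1 using Sym2.ind with
    | _ a b =>
      intro he1
      revert he2
      induction e2 using Sym2.ind with
      | _ c d =>
        intro he2
        rw [← he2, Sym2.map_pair_eq, Sym2.map_pair_eq, Sym2.eq_iff] at he1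
        rcases he1 with ⟨h, -⟩ | ⟨h, -⟩ <;>
          exact congrArg Sigma.fst h

end sigma

theorem statement_12 {I : Type*} [Fintype I] [Nonempty I]
    {V : I → Type*} [∀ i, Fintype (V i)] [∀ i, DecidableEq (V i)]
    (G : ∀ i, SimpleGraph (V i)) [∀ i, DecidableRel (G i).Adj]
    (d n : ℕ) (hcard : ∀ i, Fintype.card (V i) = n)
    (hreg : ∀ i, (G i).IsRegularOfDegree d)
    (k : ℕ) (hk1 : 1 ≤ k) (hk : k ≤ n) (η : ℝ) (hη0 : 0 ≤ η) (hη1 : η ≤ 1)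
    (hyp : ∀ i, ∀ S : Finset (V i), S.Nonempty → S.card ≤ k →
      (1 - η) * d * S.card < (bdryG (G i) S : ℝ)) :
    ∀ S : Finset (Σ i, V i), S.card = k →
      (d : ℝ) * k * (2 - η) / 2 < (covG (sigmaGraph G) S : ℝ) := by
  intro S hS
  classical
  set s : I → ℕ := fun i => (sliceF S i).card with hs
  have hsum : ∑ i, s i = k := by rw [hs]; simpa [hS] using sum_card_sliceF S
  have hsle : ∀ i, s i ≤ k := fun i => hS ▸ card_sliceF_le S i
  have h2 : ∀ i, 2 * covG (G i) (sliceF S i)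
      = d * s i + bdryG (G i) (sliceF S i) :=
    fun i => two_mul_covG (G i) (hreg i) _
  rw [div_lt_iff₀ (by norm_num : (0:ℝ) < 2)]
  have hnat : covG (sigmaGraph G) S * 2
      = ∑ i, (d * s i + bdryG (G i) (sliceF S i)) := by
    rw [covG_sigma G S, Finset.sum_mul]
    exact Finset.sum_congr rfl fun i _ => by rw [mul_comm, h2 i]
  have hcov2 : (covG (sigmaGraph G) S : ℝ) * 2
      = ∑ i, ((d : ℝ) * (s i : ℝ) + (bdryG (G i) (sliceF S i) : ℝ)) := by
    exact_mod_cast congrArg (Nat.cast : ℕ → ℝ) hnat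
  rw [hcov2]
  have hlhs : (d : ℝ) * k * (2 - η) = ∑ i, ((2 - η) * ((d : ℝ) * (s i : ℝ))) := by
    rw [← Finset.mul_sum, ← Finset.mul_sum]
    have hk' : ∑ i, ((s i : ℝ)) = (k : ℝ) := by exact_mod_cast hsum
    rw [hk']; ring
  rw [hlhs]
  obtain ⟨x, hx⟩ := Finset.card_pos.mp (by omega : 0 < S.card)
  have hxs : x.2 ∈ sliceF S x.1 := mem_sliceF.mpr (by rwa [Sigma.eta])
  apply Finset.sum_lt_sum
  · intro i _
    have hb : (0:ℝ) ≤ bdryG (G i) (sliceF S i) := Nat.cast_nonneg _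
    rcases Nat.eq_zero_or_pos (s i) with h0 | hpos
    · rw [h0]; push_cast; linarith
    · have hne : (sliceF S i).Nonempty := Finset.card_pos.mp hpos
      have hlt := hyp i (sliceF S i) hne (hsle i)
      have hid : (2 - η) * ((d : ℝ) * (s i : ℝ))
          = (d : ℝ) * (s i : ℝ) + (1 - η) * (d : ℝ) * (s i : ℝ) := by ring
      rw [hid]; exact le_of_lt (by linarith)
  · refine ⟨x.1, Finset.mem_univ _, ?_⟩
    have hne : (sliceF S x.1).Nonempty := ⟨x.2, hxs⟩
    have hlt := hyp x.1 (sliceF S x.1) hne (hsle x.1)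
    have hid : (2 - η) * ((d : ℝ) * (s x.1 : ℝ))
        = (d : ℝ) * (s x.1 : ℝ) + (1 - η) * (d : ℝ) * (s x.1 : ℝ) := by ring
    rw [hid]; linarith
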